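/- Let n > 2, 0 ≤ m < 2, and ψ(x) = (1/Γ((n-m)/2)) ∫₀^∞ (1 - (w/(1+w))^(n/2-1)) w^(-m/2) e^(-xw) dw. Define p(x) = -x^(1-m/2) ψ'(x) for x > 0. Then p is nonnegative and decreasing on (0,∞). -/

import Mathlib

open MeasureTheory Real Set

lemma int_rpow_exp {s r : ℝ} (hs : 0 < s) (hr : -1 < r) :
    IntegrableOn (fun w : ℝ => w ^ r * Real.exp (-(s * w))) (Set.Ioi 0) := by
  have h := integrableOn_rpow_mul_exp_neg_mul_rpow hr one_pos hs
  simpa [Real.rpow_one, neg_mul] using h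

lemma rpow_neg_convex {a t b c : ℝ} (ha : 0 < a) (hb : 0 < b) (hc : 0 < c)
    (ht0 : 0 ≤ t) (ht1 : t ≤ 1) :
    (t * b + (1 - t) * c) ^ (-a) ≤ t * b ^ (-a) + (1 - t) * c ^ (-a) := by
  have ht1' : (0:ℝ) ≤ 1 - t := by linarith
  have h1 : b ^ t * c ^ (1 - t) ≤ t * b + (1 - t) * c :=
    Real.geom_mean_le_arith_mean2_weighted ht0 ht1' hb.le hc.le (by ring)
  have hgm : 0 < b ^ t * c ^ (1 - t) :=
    mul_pos (Real.rpow_pos_of_pos hb t) (Real.rpow_pos_of_pos hc (1 - t))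
  have h2 : (t * b + (1 - t) * c) ^ (-a) ≤ (b ^ t * c ^ (1 - t)) ^ (-a) :=
    Real.rpow_le_rpow_of_nonpos hgm h1 (by linarith)
  have h3 : (b ^ t * c ^ (1 - t)) ^ (-a) = (b ^ (-a)) ^ t * (c ^ (-a)) ^ (1 - t) := by
    rw [Real.mul_rpow (Real.rpow_nonneg hb.le t) (Real.rpow_nonneg hc.le (1 - t)),
      ← Real.rpow_mul hb.le, ← Real.rpow_mul hc.le, ← Real.rpow_mul hb.le,
      ← Real.rpow_mul hc.le, mul_comm t (-a), mul_comm (1 - t) (-a)]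
  have h4 : (b ^ (-a)) ^ t * (c ^ (-a)) ^ (1 - t) ≤ t * b ^ (-a) + (1 - t) * c ^ (-a) :=
    Real.geom_mean_le_arith_mean2_weighted ht0 ht1'
      (Real.rpow_nonneg hb.le _) (Real.rpow_nonneg hc.le _) (by ring)
  calc (t * b + (1 - t) * c) ^ (-a) ≤ (b ^ t * c ^ (1 - t)) ^ (-a) := h2
    _ = _ := h3
    _ ≤ _ := h4

lemma chord_ineq {a x y v : ℝ} (ha : 0 < a) (hx : 0 < x) (hxy : x ≤ y) (hv : 0 < v) :
    x * (1 - (v / (y + v)) ^ a) ≤ y * (1 - (v / (x + v)) ^ a) := by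
  have hy : 0 < y := lt_of_lt_of_le hx hxy
  set t : ℝ := x / y with htdef
  have ht0 : 0 < t := div_pos hx hy
  have ht1 : t ≤ 1 := (div_le_one hy).2 hxy
  have hb : 0 < y + v := by linarith
  have hc : 0 < v := hv
  have hconv := rpow_neg_convex ha hb hc ht0.le ht1
  have hty : t * y = x := div_mul_cancel₀ x hy.ne'
  have hsum : t * (y + v) + (1 - t) * v = x + v := by linear_combination hty
  rw [hsum] at hconv
  -- multiply by v ^ a
  have hva : 0 < v ^ a := Real.rpow_pos_of_pos hv a
  have hdiv1 : (v / (x + v)) ^ a = v ^ a * (x + v) ^ (-a) := by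
    rw [Real.div_rpow hv.le (by linarith : (0:ℝ) ≤ x + v), Real.rpow_neg (by linarith), div_eq_mul_inv]
  have hdiv2 : (v / (y + v)) ^ a = v ^ a * (y + v) ^ (-a) := by
    rw [Real.div_rpow hv.le hb.le, Real.rpow_neg hb.le, div_eq_mul_inv]
  have hvv : v ^ a * v ^ (-a) = 1 := by
    rw [← Real.rpow_add hv]; simp
  have hmul := mul_le_mul_of_nonneg_left hconv hva.le
  rw [mul_add, ← mul_assoc, ← mul_assoc] at hmul
  -- hmul : v^a * (x+v)^(-a) ≤ v^a * t * (y+v)^(-a) + v^a * (1-t) * v^(-a)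
  have key : (v / (x + v)) ^ a ≤ t * (v / (y + v)) ^ a + (1 - t) := by
    rw [hdiv1, hdiv2]
    calc v ^ a * (x + v) ^ (-a) ≤ v ^ a * t * (y + v) ^ (-a) + v ^ a * (1 - t) * v ^ (-a) := hmul
      _ = t * (v ^ a * (y + v) ^ (-a)) + (1 - t) * (v ^ a * v ^ (-a)) := by ring
      _ = t * (v ^ a * (y + v) ^ (-a)) + (1 - t) := by rw [hvv, mul_one]
  -- now scale by y
  have hkey2 := mul_le_mul_of_nonneg_left key hy.le
  have expand : y * (t * (v / (y + v)) ^ a + (1 - t)) = x * (v / (y + v)) ^ a + (y - x) := by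
    linear_combination ((v / (y + v)) ^ a - 1) * hty
  rw [expand] at hkey2
  nlinarith [hkey2]

noncomputable def gg (n m w : ℝ) : ℝ := (1 - (w / (1 + w)) ^ (n / 2 - 1)) * w ^ (-m / 2)

lemma rpow_split {w : ℝ} (hw : 0 < w) (m : ℝ) : w ^ (1 - m / 2) = w ^ (-m / 2) * w := by
  rw [show (1 - m / 2) = (-m / 2) + 1 by ring, Real.rpow_add hw, Real.rpow_one]

lemma gg_nonneg {n m : ℝ} (hn : 2 < n) {w : ℝ} (hw : 0 < w) : 0 ≤ gg n m w := by
  have h1 : 0 < 1 + w := by linarith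
  have hlt : w / (1 + w) < 1 := (div_lt_one h1).2 (by linarith)
  have h2 : (w / (1 + w)) ^ (n / 2 - 1) < 1 :=
    Real.rpow_lt_one (div_nonneg hw.le h1.le) hlt (by linarith)
  have : (0:ℝ) ≤ w ^ (-m / 2) := Real.rpow_nonneg hw.le _
  unfold gg
  nlinarith

lemma gg_le {n m : ℝ} (hn : 2 < n) {w : ℝ} (hw : 0 < w) : gg n m w ≤ w ^ (-m / 2) := by
  have h1 : 0 < 1 + w := by linarith
  have h2 : (0:ℝ) ≤ (w / (1 + w)) ^ (n / 2 - 1) := Real.rpow_nonneg (div_nonneg hw.le h1.le) _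
  have h3 : (0:ℝ) ≤ w ^ (-m / 2) := Real.rpow_nonneg hw.le _
  unfold gg
  nlinarith

lemma meas_gg (n m : ℝ) : Measurable (gg n m) := by
  unfold gg
  fun_prop

set_option maxHeartbeats 1000000 in
lemma hasDeriv_G (n m : ℝ) (hn : 2 < n) (hm2 : m < 2) {x : ℝ} (hx : 0 < x) :
    HasDerivAt (fun y => ∫ w in Set.Ioi (0:ℝ), gg n m w * Real.exp (-y * w))
      (∫ w in Set.Ioi (0:ℝ), gg n m w * (-w * Real.exp (-x * w))) x := by
  have hr1 : (-1:ℝ) < -m / 2 := by linarith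
  have hr2 : (-1:ℝ) < 1 - m / 2 := by linarith
  have hgm : Measurable (gg n m) := meas_gg n m
  have hF_meas : ∀ y : ℝ, AEStronglyMeasurable (fun w => gg n m w * Real.exp (-y * w))
      (volume.restrict (Set.Ioi 0)) := fun y =>
    (hgm.mul (by fun_prop)).aestronglyMeasurable
  have hF'_meas : AEStronglyMeasurable (fun w => gg n m w * (-w * Real.exp (-x * w)))
      (volume.restrict (Set.Ioi 0)) := (hgm.mul (by fun_prop)).aestronglyMeasurable
  have hbound_int : Integrable (fun w => w ^ (1 - m / 2) * Real.exp (-(x / 2 * w)))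
      (volume.restrict (Set.Ioi 0)) := int_rpow_exp (half_pos hx) hr2
  have hF_int : Integrable (fun w => gg n m w * Real.exp (-x * w))
      (volume.restrict (Set.Ioi 0)) := by
    refine (int_rpow_exp hx hr1).mono' (hF_meas x) ?_
    refine (ae_restrict_iff' measurableSet_Ioi).2 (Filter.Eventually.of_forall fun w hw => ?_)
    rw [Real.norm_eq_abs,
      abs_of_nonneg (mul_nonneg (gg_nonneg hn hw) (Real.exp_nonneg _)), neg_mul]
    exact mul_le_mul_of_nonneg_right (gg_le hn hw) (Real.exp_nonneg _)
  have hbound : ∀ᵐ w ∂(volume.restrict (Set.Ioi (0:ℝ))), ∀ y ∈ Metric.ball x (x / 2),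
      ‖gg n m w * (-w * Real.exp (-y * w))‖ ≤ w ^ (1 - m / 2) * Real.exp (-(x / 2 * w)) := by
    refine (ae_restrict_iff' measurableSet_Ioi).2 (Filter.Eventually.of_forall fun w hw y hy => ?_)
    have hw' : 0 < w := hw
    have hy2 : x / 2 ≤ y := by
      have := abs_lt.1 (by simpa [Real.dist_eq] using Metric.mem_ball.1 hy)
      linarith [this.1]
    rw [Real.norm_eq_abs, abs_mul, abs_of_nonneg (gg_nonneg hn hw'),
      abs_mul, abs_neg, abs_of_pos hw', abs_of_pos (Real.exp_pos _)]
    calc gg n m w * (w * Real.exp (-y * w))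
        ≤ w ^ (-m / 2) * (w * Real.exp (-y * w)) :=
          mul_le_mul_of_nonneg_right (gg_le hn hw')
            (mul_nonneg hw'.le (Real.exp_nonneg _))
      _ ≤ w ^ (-m / 2) * (w * Real.exp (-(x / 2 * w))) := by
          have : Real.exp (-y * w) ≤ Real.exp (-(x / 2 * w)) :=
            Real.exp_le_exp.2 (by nlinarith)
          have h0 : (0:ℝ) ≤ w ^ (-m / 2) := Real.rpow_nonneg hw'.le _
          exact mul_le_mul_of_nonneg_left (mul_le_mul_of_nonneg_left this hw'.le) h0
      _ = w ^ (1 - m / 2) * Real.exp (-(x / 2 * w)) := by rw [rpow_split hw' m]; ring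
  have hdiff : ∀ᵐ w ∂(volume.restrict (Set.Ioi (0:ℝ))), ∀ y ∈ Metric.ball x (x / 2),
      HasDerivAt (fun y => gg n m w * Real.exp (-y * w))
        (gg n m w * (-w * Real.exp (-y * w))) y := by
    refine Filter.Eventually.of_forall fun w y _ => ?_
    have h0 : HasDerivAt (fun y : ℝ => -y * w) (-w) y := by
      simpa using ((hasDerivAt_id y).neg.mul_const w)
    have := (h0.exp).const_mul (gg n m w)
    simpa [mul_comm] using this
  exact (hasDerivAt_integral_of_dominated_loc_of_deriv_le
    (F' := fun y w => gg n m w * (-w * Real.exp (-y * w)))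
    (bound := fun w => w ^ (1 - m / 2) * Real.exp (-(x / 2 * w))) (Metric.ball_mem_nhds x (half_pos hx))
    (Filter.Eventually.of_forall hF_meas) hF_int hF'_meas hbound hbound_int hdiff).2

lemma CV (n m : ℝ) (hm2 : m < 2) {x : ℝ} (hx : 0 < x) :
    x ^ (1 - m / 2) * ∫ w in Set.Ioi (0:ℝ), gg n m w * w * Real.exp (-x * w)
      = x⁻¹ * ∫ v in Set.Ioi (0:ℝ),
          (1 - (v / (x + v)) ^ (n / 2 - 1)) * v ^ (1 - m / 2) * Real.exp (-v) := by
  have hcv := integral_comp_mul_left_Ioi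
    (fun v => (1 - (v / (x + v)) ^ (n / 2 - 1)) * v ^ (1 - m / 2) * Real.exp (-v)) 0 hx
  rw [mul_zero, smul_eq_mul] at hcv
  rw [← hcv, ← MeasureTheory.integral_const_mul]
  refine setIntegral_congr_fun measurableSet_Ioi fun w hw => ?_
  have hw' : (0:ℝ) < w := hw
  have h1 : x * w / (x + x * w) = w / (1 + w) := by
    rw [show x + x * w = x * (1 + w) by ring, mul_div_mul_left _ _ hx.ne']
  rw [h1, Real.mul_rpow hx.le hw'.le, rpow_split hw' m]
  unfold gg
  ring_nf

lemma qq_int (n m : ℝ) (hn : 2 < n) (hm2 : m < 2) {x : ℝ} (hx : 0 ≤ x) :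
    IntegrableOn (fun v : ℝ =>
      (1 - (v / (x + v)) ^ (n / 2 - 1)) * v ^ (1 - m / 2) * Real.exp (-v)) (Set.Ioi 0) := by
  have base : IntegrableOn (fun v : ℝ => v ^ (1 - m / 2) * Real.exp (-(1 * v))) (Set.Ioi 0) :=
    int_rpow_exp one_pos (by linarith)
  refine base.mono' ?_ ?_
  · apply Measurable.aestronglyMeasurable
    fun_prop
  · refine (ae_restrict_iff' measurableSet_Ioi).2 (Filter.Eventually.of_forall fun v hv => ?_)
    have hv' : (0:ℝ) < v := hv
    have hxv : 0 < x + v := by linarith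
    have hb0 : (0:ℝ) ≤ v / (x + v) := div_nonneg hv'.le hxv.le
    have hb1 : v / (x + v) ≤ 1 := (div_le_one hxv).2 (by linarith)
    have hp0 : (0:ℝ) ≤ (v / (x + v)) ^ (n / 2 - 1) := Real.rpow_nonneg hb0 _
    have hp1 : (v / (x + v)) ^ (n / 2 - 1) ≤ 1 := Real.rpow_le_one hb0 hb1 (by linarith)
    have hvp : (0:ℝ) ≤ v ^ (1 - m / 2) := Real.rpow_nonneg hv'.le _
    rw [Real.norm_eq_abs, abs_of_nonneg
      (mul_nonneg (mul_nonneg (by linarith) hvp) (Real.exp_nonneg _)), one_mul]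
    nlinarith [Real.exp_nonneg (-v), mul_nonneg hvp (Real.exp_nonneg (-v))]

lemma qq_chord (n m : ℝ) (hn : 2 < n) (hm2 : m < 2) {x y : ℝ} (hx : 0 < x) (hxy : x ≤ y) :
    x * ∫ v in Set.Ioi (0:ℝ),
        (1 - (v / (y + v)) ^ (n / 2 - 1)) * v ^ (1 - m / 2) * Real.exp (-v)
      ≤ y * ∫ v in Set.Ioi (0:ℝ),
        (1 - (v / (x + v)) ^ (n / 2 - 1)) * v ^ (1 - m / 2) * Real.exp (-v) := by
  have hy : 0 < y := lt_of_lt_of_le hx hxy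
  rw [← MeasureTheory.integral_const_mul, ← MeasureTheory.integral_const_mul]
  refine setIntegral_mono_on ((qq_int n m hn hm2 hy.le).const_mul x)
    ((qq_int n m hn hm2 hx.le).const_mul y) measurableSet_Ioi fun v hv => ?_
  have hv' : (0:ℝ) < v := hv
  have hch := chord_ineq (show (0:ℝ) < n / 2 - 1 by linarith) hx hxy hv'
  have hc0 : (0:ℝ) ≤ v ^ (1 - m / 2) * Real.exp (-v) :=
    mul_nonneg (Real.rpow_nonneg hv'.le _) (Real.exp_nonneg _)
  calc x * ((1 - (v / (y + v)) ^ (n / 2 - 1)) * v ^ (1 - m / 2) * Real.exp (-v))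
      = (x * (1 - (v / (y + v)) ^ (n / 2 - 1))) * (v ^ (1 - m / 2) * Real.exp (-v)) := by ring
    _ ≤ (y * (1 - (v / (x + v)) ^ (n / 2 - 1))) * (v ^ (1 - m / 2) * Real.exp (-v)) :=
        mul_le_mul_of_nonneg_right hch hc0
    _ = y * ((1 - (v / (x + v)) ^ (n / 2 - 1)) * v ^ (1 - m / 2) * Real.exp (-v)) := by ring

theorem p_nonneg_antitone (n m : ℝ) (hn : 2 < n) (hm0 : 0 ≤ m) (hm2 : m < 2)
    (ψ : ℝ → ℝ)
    (hψ : ∀ x : ℝ, ψ x = (1 / Real.Gamma ((n - m) / 2)) *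
      ∫ w in Set.Ioi (0:ℝ),
        (1 - (w / (1 + w)) ^ (n / 2 - 1)) * w ^ (-m / 2) * Real.exp (-x * w))
    (p : ℝ → ℝ) (hp : ∀ x : ℝ, p x = -x ^ (1 - m / 2) * deriv ψ x) :
    (∀ x ∈ Set.Ioi (0:ℝ), 0 ≤ p x) ∧ AntitoneOn p (Set.Ioi 0) := by
  have hΓ : 0 < Real.Gamma ((n - m) / 2) := Real.Gamma_pos_of_pos (by linarith)
  have hψfun : ψ = fun y => (1 / Real.Gamma ((n - m) / 2)) *
      ∫ w in Set.Ioi (0:ℝ), gg n m w * Real.exp (-y * w) := by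
    funext y; rw [hψ y]; rfl
  have hpx : ∀ x : ℝ, 0 < x → p x = (1 / Real.Gamma ((n - m) / 2)) * (x⁻¹ *
      ∫ v in Set.Ioi (0:ℝ),
        (1 - (v / (x + v)) ^ (n / 2 - 1)) * v ^ (1 - m / 2) * Real.exp (-v)) := by
    intro x hx
    have hcv := CV n m hm2 hx
    have hd := (hasDeriv_G n m hn hm2 hx).const_mul (1 / Real.Gamma ((n - m) / 2))
    have h2 : (∫ w in Set.Ioi (0:ℝ), gg n m w * (-w * Real.exp (-x * w)))
        = -∫ w in Set.Ioi (0:ℝ), gg n m w * w * Real.exp (-x * w) := by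
      rw [← integral_neg]; congr 1; funext w; ring
    rw [h2] at hd
    have hder : deriv ψ x = (1 / Real.Gamma ((n - m) / 2)) *
        (-∫ w in Set.Ioi (0:ℝ), gg n m w * w * Real.exp (-x * w)) := by
      rw [hψfun]; exact hd.deriv
    rw [hp x, hder, ← hcv]
    ring
  have hqnn : ∀ x : ℝ, 0 ≤ x → 0 ≤ ∫ v in Set.Ioi (0:ℝ),
      (1 - (v / (x + v)) ^ (n / 2 - 1)) * v ^ (1 - m / 2) * Real.exp (-v) := by
    intro x hx
    refine setIntegral_nonneg measurableSet_Ioi fun v hv => ?_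
    have hv' : (0:ℝ) < v := hv
    have hxv : 0 < x + v := by linarith
    have hb0 : (0:ℝ) ≤ v / (x + v) := div_nonneg hv'.le hxv.le
    have hb1 : v / (x + v) ≤ 1 := (div_le_one hxv).2 (by linarith)
    have hp1 : (v / (x + v)) ^ (n / 2 - 1) ≤ 1 := Real.rpow_le_one hb0 hb1 (by linarith)
    exact mul_nonneg (mul_nonneg (by linarith) (Real.rpow_nonneg hv'.le _)) (Real.exp_nonneg _)
  constructor
  · intro x hx
    have hx' : (0:ℝ) < x := hx
    rw [hpx x hx']
    exact mul_nonneg (by positivity)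
      (mul_nonneg (inv_nonneg.2 hx'.le) (hqnn x hx'.le))
  · intro x hx y hy hxy
    have hx' : (0:ℝ) < x := hx
    have hy' : (0:ℝ) < y := hy
    rw [hpx x hx', hpx y hy']
    refine mul_le_mul_of_nonneg_left ?_ (by positivity)
    have hch := qq_chord n m hn hm2 hx' hxy
    rw [inv_mul_eq_div, inv_mul_eq_div, div_le_div_iff₀ hy' hx']
    linarith
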